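/- Let f : ℝⁿ → ℝ be a Borel measurable level convex function. Then f is strictly level convex if and only if f(∫_Ω φ dμ) < μ-ess sup_{x∈Ω} f(φ(x)) for every probability measure μ on ℝⁿ supported on an open set Ω ⊆ ℝ^d and every φ ∈ L¹_μ(Ω; ℝⁿ) that is not μ-a.e. constant. -/

import Mathlib

open Set MeasureTheory

/-- A function on `ℝⁿ` is *level convex* if
`f (t ξ + (1-t) η) ≤ max (f ξ) (f η)` for all `ξ, η` and `t ∈ [0,1]`. -/
def LevelConvex {n : ℕ} (f : EuclideanSpace ℝ (Fin n) → ℝ) : Prop :=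
  ∀ ξ η : EuclideanSpace ℝ (Fin n), ∀ t ∈ Set.Icc (0 : ℝ) 1,
    f (t • ξ + (1 - t) • η) ≤ max (f ξ) (f η)

/-- A function on `ℝⁿ` is *strictly level convex* if it is level convex and
`f (t ξ + (1-t) η) < max (f ξ) (f η)` for every `t ∈ (0,1)` and all `ξ ≠ η`. -/
def StrictLevelConvex {n : ℕ} (f : EuclideanSpace ℝ (Fin n) → ℝ) : Prop :=
  LevelConvex f ∧
    ∀ ξ η : EuclideanSpace ℝ (Fin n), ξ ≠ η → ∀ t ∈ Set.Ioo (0 : ℝ) 1,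
      f (t • ξ + (1 - t) • η) < max (f ξ) (f η)

lemma exists_sep {E : Type*} [NormedAddCommGroup E] [InnerProductSpace ℝ E]
    [FiniteDimensional ℝ E] {S : Set E} (hS : Convex ℝ S) (hne : S.Nonempty)
    {b : E} (hb : b ∉ S) :
    ∃ ℓ : E →L[ℝ] ℝ, ℓ ≠ 0 ∧ ∀ x ∈ S, ℓ x ≤ ℓ b := by
  by_cases hint : (interior S).Nonempty
  · obtain ⟨y, hy⟩ := hint
    obtain ⟨ℓ, hℓ⟩ := geometric_hahn_banach_open_point (hS.interior) isOpen_interior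
      (fun h => hb (interior_subset h))
    refine ⟨ℓ, ?_, ?_⟩
    · intro h0
      have := hℓ y hy
      rw [h0] at this
      simp at this
    · intro x hx
      have key : ∀ t : ℝ, t ∈ Set.Ioc (0:ℝ) 1 → t * ℓ y + (1 - t) * ℓ x < ℓ b := by
        intro t ht
        have hmem : t • y + (1 - t) • x ∈ interior S :=
          hS.combo_interior_closure_mem_interior hy (subset_closure hx) ht.1
            (by linarith [ht.2]) (by ring)
        have := hℓ _ hmem
        simpa using this
      have htend : Filter.Tendsto (fun t : ℝ => t * ℓ y + (1 - t) * ℓ x)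
          (nhdsWithin 0 (Set.Ioc (0:ℝ) 1)) (nhds (ℓ x)) := by
        have h1 : Filter.Tendsto (fun t : ℝ => t * ℓ y + (1 - t) * ℓ x)
            (nhds 0) (nhds (0 * ℓ y + (1 - 0) * ℓ x)) := by
          exact Filter.Tendsto.add ((continuous_id.mul continuous_const).tendsto 0)
            (((continuous_const.sub continuous_id).mul continuous_const).tendsto 0)
        simpa using h1.mono_left nhdsWithin_le_nhds
      have hbot : (nhdsWithin (0:ℝ) (Set.Ioc (0:ℝ) 1)).NeBot := by
        apply mem_closure_iff_nhdsWithin_neBot.mp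
        rw [closure_Ioc (by norm_num : (0:ℝ) ≠ 1)]
        exact ⟨le_refl _, by norm_num⟩
      exact le_of_tendsto htend
        (Filter.eventually_of_mem self_mem_nhdsWithin (fun t ht => (key t ht).le))
  · -- flat case
    obtain ⟨x₀, hx₀⟩ := hne
    have hspan : affineSpan ℝ S ≠ ⊤ := fun h =>
      hint ((hS.interior_nonempty_iff_affineSpan_eq_top).2 h)
    have hnes : ((affineSpan ℝ S : AffineSubspace ℝ E) : Set E).Nonempty :=
      ⟨x₀, subset_affineSpan ℝ S hx₀⟩
    have hdir : (affineSpan ℝ S).direction ≠ ⊤ := fun h =>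
      hspan ((AffineSubspace.direction_eq_top_iff_of_nonempty hnes).1 h)
    obtain ⟨v, hv, hv0⟩ : ∃ v, v ∈ ((affineSpan ℝ S).direction)ᗮ ∧ v ≠ 0 := by
      by_contra hcon
      push_neg at hcon
      apply hdir
      rw [← Submodule.orthogonal_eq_bot_iff]
      exact (Submodule.eq_bot_iff _).2 fun w hw => by
        by_contra hw0; exact hw0 (hcon w hw)
    set ℓ₀ : E →L[ℝ] ℝ := innerSL ℝ v with hℓ₀
    have hconst : ∀ x ∈ S, ℓ₀ x = ℓ₀ x₀ := by
      intro x hx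
      have hmem : x -ᵥ x₀ ∈ (affineSpan ℝ S).direction :=
        AffineSubspace.vsub_mem_direction (subset_affineSpan ℝ S hx)
          (subset_affineSpan ℝ S hx₀)
      have : inner ℝ (x - x₀) v = (0:ℝ) := hv (x - x₀) hmem
      have h2 : inner ℝ x v - inner ℝ x₀ v = (0:ℝ) := by
        rwa [inner_sub_left] at this
      have hc1 : (inner ℝ v x : ℝ) = inner ℝ x v := real_inner_comm _ _
      have hc2 : (inner ℝ v x₀ : ℝ) = inner ℝ x₀ v := real_inner_comm _ _
      simp only [hℓ₀, innerSL_apply_apply]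
      linarith
    rcases le_or_gt (ℓ₀ x₀) (ℓ₀ b) with hcb | hcb
    · refine ⟨ℓ₀, ?_, fun x hx => (hconst x hx).le.trans hcb⟩
      intro h
      apply hv0
      have : ℓ₀ v = 0 := by rw [h]; rfl
      rw [hℓ₀, innerSL_apply_apply] at this
      exact inner_self_eq_zero.mp this
    · refine ⟨-ℓ₀, ?_, fun x hx => ?_⟩
      · intro h; apply hv0
        have : ℓ₀ = 0 := by
          ext w; have := congrFun (congrArg DFunLike.coe h) w
          simp at this ⊢; linarith [this]
        simpa [hℓ₀] using congrArg (fun (m : E →L[ℝ] ℝ) => m v) this |>.trans rfl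
      · simp only [ContinuousLinearMap.neg_apply, hconst x hx]
        linarith

lemma barycenter_mem_aux : ∀ (k : ℕ) {E : Type} [NormedAddCommGroup E]
    [InnerProductSpace ℝ E] [FiniteDimensional ℝ E], Module.finrank ℝ E ≤ k →
    ∀ {α : Type} [MeasurableSpace α] (μ : Measure α) [IsProbabilityMeasure μ]
    (g : α → E), Integrable g μ → ∀ (S : Set E), Convex ℝ S →
    (∀ᵐ x ∂μ, g x ∈ S) → (∫ x, g x ∂μ) ∈ S := by
  intro k
  induction k with
  | zero =>
    intro E _ _ _ hrank α _ μ _ g hg S hS hmem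
    haveI : Subsingleton E := by
      rw [← Module.finrank_zero_iff (R := ℝ)]
      omega
    obtain ⟨x, hx⟩ := hmem.exists
    exact (Subsingleton.elim _ _ : (∫ x, g x ∂μ) = g x) ▸ hx
  | succ k ih =>
    intro E _ _ _ hrank α _ μ _ g hg S hS hmem
    set b := ∫ x, g x ∂μ with hbdef
    by_cases hb : b ∈ S
    · exact hb
    exfalso
    obtain ⟨x₀, hx₀⟩ := hmem.exists
    obtain ⟨ℓ, hℓ0, hℓ⟩ := exists_sep hS ⟨g x₀, hx₀⟩ hb
    have hint : ∫ x, ℓ (g x) ∂μ = ℓ b := (ℓ.integral_comp_comm hg)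
    have hle : ∀ᵐ x ∂μ, ℓ (g x) ≤ ℓ b := hmem.mono fun x hx => hℓ _ hx
    have heq : ∀ᵐ x ∂μ, ℓ (g x) = ℓ b := by
      have hnn : 0 ≤ᵐ[μ] fun x => ℓ b - ℓ (g x) := hle.mono fun x hx => by simp only [Pi.zero_apply]; linarith
      have hi : Integrable (fun x => ℓ b - ℓ (g x)) μ :=
        (integrable_const (ℓ b)).sub (ℓ.integrable_comp hg)
      have hz : ∫ x, (ℓ b - ℓ (g x)) ∂μ = 0 := by
        rw [integral_sub (integrable_const _) (ℓ.integrable_comp hg), hint,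
          integral_const]
        simp
      have := (integral_eq_zero_iff_of_nonneg_ae hnn hi).1 hz
      filter_upwards [this] with x hx
      have : ℓ b - ℓ (g x) = 0 := hx
      linarith
    set K := LinearMap.ker (ℓ : E →ₗ[ℝ] ℝ) with hKdef
    have hKne : K ≠ ⊤ := by
      intro h
      apply hℓ0
      ext w
      have : w ∈ K := h ▸ Submodule.mem_top
      simpa [hKdef] using this
    have hKrank : Module.finrank ℝ K ≤ k := by
      have := Submodule.finrank_lt (K := ℝ) (V := E) hKne
      omega
    set P := K.orthogonalProjectionOnto with hPdef
    set g' : α → K := fun x => P (g x - b) with hg'def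
    have hg'i : Integrable g' μ := P.integrable_comp (hg.sub (integrable_const b))
    have hg'int : ∫ x, g' x ∂μ = 0 := by
      have hcomm := P.integral_comp_comm (hg.sub (integrable_const b))
      simp only [Pi.sub_apply] at hcomm
      rw [hg'def]
      rw [hcomm, integral_sub hg (integrable_const b), integral_const]
      simp [hbdef]
    set S' : Set K := {y : K | (y : E) + b ∈ S} with hS'def
    have hS'conv : Convex ℝ S' := by
      intro y hy z hz a c ha hc hac
      show ((a • y + c • z : K) : E) + b ∈ S
      have : ((a • y + c • z : K) : E) + b = a • ((y : E) + b) + c • ((z : E) + b) := by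
        push_cast
        rw [smul_add, smul_add]
        rw [show a • (y:E) + a • b + (c • (z:E) + c • b)
            = a • (y:E) + c • (z:E) + (a • b + c • b) from by abel]
        rw [← add_smul, hac, one_smul]
      rw [this]
      exact hS hy hz ha hc hac
    have hmem' : ∀ᵐ x ∂μ, g' x ∈ S' := by
      filter_upwards [hmem, heq] with x hxS hxe
      have hker : g x - b ∈ K := by
        simp only [hKdef, LinearMap.mem_ker]
        show ℓ (g x - b) = 0
        rw [map_sub]
        linarith
      have hPval : g' x = (⟨g x - b, hker⟩ : K) := by
        rw [hg'def]
        exact_mod_cast Submodule.orthogonalProjectionOnto_mem_subspace_eq_self (⟨g x - b, hker⟩ : K)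
      show ((g' x : K) : E) + b ∈ S
      rw [hPval]
      simpa using hxS
    have h0 : (0 : K) ∈ S' := hg'int ▸ ih hKrank μ g' hg'i S' hS'conv hmem'
    apply hb
    have : ((0 : K) : E) + b ∈ S := h0
    simpa using this

lemma levelConvex_sublevel {n : ℕ} {f : EuclideanSpace ℝ (Fin n) → ℝ}
    (hlc : LevelConvex f) (m : ℝ) : Convex ℝ {ξ | f ξ ≤ m} := by
  intro ξ hξ η hη a c ha hc hac
  have hc' : c = 1 - a := by linarith
  subst hc'
  calc f (a • ξ + (1 - a) • η) ≤ max (f ξ) (f η) :=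
        hlc ξ η a ⟨ha, by linarith⟩
    _ ≤ m := max_le hξ hη

lemma forward_key {n d : ℕ} (f : EuclideanSpace ℝ (Fin n) → ℝ)
    (hslc : StrictLevelConvex f)
    (μ : Measure (EuclideanSpace ℝ (Fin d))) [IsProbabilityMeasure μ]
    (φ : EuclideanSpace ℝ (Fin d) → EuclideanSpace ℝ (Fin n))
    (hφi : Integrable φ μ) (hφm : StronglyMeasurable φ)
    (hne : ¬ (∃ z, φ =ᵐ[μ] fun _ => z)) :
    (f (∫ x, φ x ∂μ) : EReal) < essSup (fun x => (f (φ x) : EReal)) μ := by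
  haveI : (MeasureTheory.ae μ).NeBot := ae_neBot.2 (IsProbabilityMeasure.ne_zero μ)
  set M := essSup (fun x => (f (φ x) : EReal)) μ with hMdef
  by_cases hMtop : M = ⊤
  · rw [hMtop]; exact EReal.coe_lt_top _
  have hae0 : ∀ᵐ x ∂μ, (f (φ x) : EReal) ≤ M := ae_le_essSup
  have hMbot : M ≠ ⊥ := by
    obtain ⟨x, hx⟩ := hae0.exists
    intro h
    rw [h] at hx
    exact (EReal.coe_ne_bot _) (le_bot_iff.1 hx)
  set m := M.toReal with hmdef
  have hMm : M = (m : EReal) := (EReal.coe_toReal hMtop hMbot).symm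
  have hae : ∀ᵐ x ∂μ, f (φ x) ≤ m := by
    filter_upwards [hae0] with x hx
    rw [hMm] at hx
    exact_mod_cast hx
  set b := ∫ x, φ x ∂μ with hbdef
  -- find a coordinate where φ is not a.e. equal to b
  have hi : ∃ i : Fin n, ¬ (∀ᵐ x ∂μ, φ x i = b i) := by
    by_contra hcon
    push_neg at hcon
    apply hne
    refine ⟨b, ?_⟩
    have : ∀ᵐ x ∂μ, ∀ i, φ x i = b i := (ae_all_iff).2 hcon
    filter_upwards [this] with x hx
    ext i
    exact hx i
  obtain ⟨i, hi⟩ := hi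
  set ℓ : EuclideanSpace ℝ (Fin n) →L[ℝ] ℝ := EuclideanSpace.proj i with hℓdef
  set g : EuclideanSpace ℝ (Fin d) → ℝ := fun x => φ x i with hgdef
  have hgℓ : ∀ x, g x = ℓ (φ x) := fun x => rfl
  set c : ℝ := b i with hcdef
  have hgi : Integrable g μ := ℓ.integrable_comp hφi
  have hgint : ∫ x, g x ∂μ = c := ℓ.integral_comp_comm hφi
  have hgmeas : Measurable g := by
    have : Measurable φ := hφm.measurable
    exact ℓ.continuous.measurable.comp this
  -- both halves have positive measure
  have side : ∀ (ν : Measure (EuclideanSpace ℝ (Fin d))) , True := fun _ => trivial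
  have hlt : μ {x | g x < c} ≠ 0 := by
    intro h0
    have hge : ∀ᵐ x ∂μ, c ≤ g x := by
      rw [Filter.eventually_iff, mem_ae_iff]
      convert h0 using 2
      ext x
      simp [not_le]
    have hnn : 0 ≤ᵐ[μ] fun x => g x - c := hge.mono fun x hx => by
      simp only [Pi.zero_apply]; linarith
    have hz : ∫ x, (g x - c) ∂μ = 0 := by
      rw [integral_sub hgi (integrable_const c), hgint, integral_const]
      simp
    have := (integral_eq_zero_iff_of_nonneg_ae hnn (hgi.sub (integrable_const c))).1 hz
    apply hi
    filter_upwards [this] with x hx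
    have : g x - c = 0 := hx
    simpa [hgdef, hcdef] using by linarith
  have hgt : μ {x | c < g x} ≠ 0 := by
    intro h0
    have hge : ∀ᵐ x ∂μ, g x ≤ c := by
      rw [Filter.eventually_iff, mem_ae_iff]
      convert h0 using 2
      ext x
      simp [not_le]
    have hnn : 0 ≤ᵐ[μ] fun x => c - g x := hge.mono fun x hx => by
      simp only [Pi.zero_apply]; linarith
    have hz : ∫ x, (c - g x) ∂μ = 0 := by
      rw [integral_sub (integrable_const c) hgi, hgint, integral_const]
      simp
    have := (integral_eq_zero_iff_of_nonneg_ae hnn ((integrable_const c).sub hgi)).1 hz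
    apply hi
    filter_upwards [this] with x hx
    have : c - g x = 0 := hx
    simpa [hgdef, hcdef] using by linarith
  set A : Set (EuclideanSpace ℝ (Fin d)) := {x | g x < c} with hAdef
  have hAmeas : MeasurableSet A := measurableSet_lt hgmeas measurable_const
  have hA0 : μ A ≠ 0 := hlt
  have hAtop : μ A ≠ ⊤ := measure_ne_top μ A
  have hAc0 : μ Aᶜ ≠ 0 := by
    intro h0
    apply hgt
    refine measure_mono_null (fun x hx => ?_) h0
    simp only [Set.mem_compl_iff, hAdef, Set.mem_setOf_eq, not_lt]
    exact le_of_lt hx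
  have hActop : μ Aᶜ ≠ ⊤ := measure_ne_top μ Aᶜ
  set t : ℝ := (μ A).toReal with htdef
  have ht0 : 0 < t := ENNReal.toReal_pos hA0 hAtop
  have hcompl : μ Aᶜ = 1 - μ A := by
    rw [measure_compl hAmeas hAtop, measure_univ]
  have hμA_le : μ A ≤ 1 := (measure_mono (Set.subset_univ A)).trans_eq measure_univ
  have hAc_toReal : (μ Aᶜ).toReal = 1 - t := by
    rw [hcompl, ENNReal.toReal_sub_of_le hμA_le ENNReal.one_ne_top]
    simp [htdef]
  have ht1 : t < 1 := by
    have : 0 < (μ Aᶜ).toReal := ENNReal.toReal_pos hAc0 hActop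
    rw [hAc_toReal] at this
    linarith
  set μ₁ : Measure (EuclideanSpace ℝ (Fin d)) := (μ A)⁻¹ • μ.restrict A with hμ₁def
  set μ₂ : Measure (EuclideanSpace ℝ (Fin d)) := (μ Aᶜ)⁻¹ • μ.restrict Aᶜ with hμ₂def
  haveI hP1 : IsProbabilityMeasure μ₁ :=
    ProbabilityTheory.cond_isProbabilityMeasure (μ := μ) (s := A) hA0
  haveI hP2 : IsProbabilityMeasure μ₂ :=
    ProbabilityTheory.cond_isProbabilityMeasure (μ := μ) (s := Aᶜ) hAc0
  have hinv1top : (μ A)⁻¹ ≠ ⊤ := ENNReal.inv_ne_top.2 hA0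
  have hinv2top : (μ Aᶜ)⁻¹ ≠ ⊤ := ENNReal.inv_ne_top.2 hAc0
  have hinv10 : (μ A)⁻¹ ≠ 0 := ENNReal.inv_ne_zero.2 hAtop
  have hinv20 : (μ Aᶜ)⁻¹ ≠ 0 := ENNReal.inv_ne_zero.2 hActop
  have hφ1i : Integrable φ μ₁ := (hφi.restrict (s := A)).smul_measure hinv1top
  have hφ2i : Integrable φ μ₂ := (hφi.restrict (s := Aᶜ)).smul_measure hinv2top
  set b₁ := ∫ x, φ x ∂μ₁ with hb₁def
  set b₂ := ∫ x, φ x ∂μ₂ with hb₂def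
  have hb₁eq : t • b₁ = ∫ x in A, φ x ∂μ := by
    rw [hb₁def, hμ₁def, integral_smul_measure, ENNReal.toReal_inv, ← htdef, smul_smul,
      mul_inv_cancel₀ (ne_of_gt ht0), one_smul]
  have hb₂eq : (1 - t) • b₂ = ∫ x in Aᶜ, φ x ∂μ := by
    rw [hb₂def, hμ₂def, integral_smul_measure, ENNReal.toReal_inv, hAc_toReal, smul_smul,
      mul_inv_cancel₀ (by linarith), one_smul]
  have hsplit : b = t • b₁ + (1 - t) • b₂ := by
    rw [hb₁eq, hb₂eq, hbdef, integral_add_compl hAmeas hφi]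
  -- a.e. facts for μ₁, μ₂
  have hae1 : ∀ᵐ x ∂μ₁, f (φ x) ≤ m := by
    rw [hμ₁def, Measure.ae_ennreal_smul_measure_iff hinv10]
    exact ae_restrict_of_ae hae
  have hae2 : ∀ᵐ x ∂μ₂, f (φ x) ≤ m := by
    rw [hμ₂def, Measure.ae_ennreal_smul_measure_iff hinv20]
    exact ae_restrict_of_ae hae
  have hg1lt : ∀ᵐ x ∂μ₁, g x < c := by
    rw [hμ₁def, Measure.ae_ennreal_smul_measure_iff hinv10]
    exact (ae_restrict_mem hAmeas).mono fun x hx => hx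
  have hg2ge : ∀ᵐ x ∂μ₂, c ≤ g x := by
    rw [hμ₂def, Measure.ae_ennreal_smul_measure_iff hinv20]
    refine (ae_restrict_mem hAmeas.compl).mono fun x hx => ?_
    simpa only [Set.mem_compl_iff, hAdef, Set.mem_setOf_eq, not_lt] using hx
  -- b₁ i < c
  have hgi1 : Integrable g μ₁ := ℓ.integrable_comp hφ1i
  have hgi2 : Integrable g μ₂ := ℓ.integrable_comp hφ2i
  have hgint1 : ∫ x, g x ∂μ₁ = b₁ i := ℓ.integral_comp_comm hφ1i
  have hgint2 : ∫ x, g x ∂μ₂ = b₂ i := ℓ.integral_comp_comm hφ2i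
  haveI : (MeasureTheory.ae μ₁).NeBot := ae_neBot.2 (IsProbabilityMeasure.ne_zero μ₁)
  have hb₁lt : b₁ i < c := by
    have hnn : 0 ≤ᵐ[μ₁] fun x => c - g x := hg1lt.mono fun x hx => by
      simp only [Pi.zero_apply]; linarith
    have hii : Integrable (fun x => c - g x) μ₁ := (integrable_const c).sub hgi1
    have hrnz : ∫ x, (c - g x) ∂μ₁ ≠ 0 := by
      intro h0
      have := (integral_eq_zero_iff_of_nonneg_ae hnn hii).1 h0
      obtain ⟨x, hx1, hx2⟩ := (this.and hg1lt).exists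
      have : c - g x = 0 := hx1
      linarith
    have hrpos : 0 < ∫ x, (c - g x) ∂μ₁ :=
      lt_of_le_of_ne (integral_nonneg_of_ae hnn) (Ne.symm hrnz)
    have : ∫ x, (c - g x) ∂μ₁ = c - b₁ i := by
      rw [integral_sub (integrable_const c) hgi1, hgint1, integral_const]
      simp
    linarith [this ▸ hrpos]
  have hb₂ge : c ≤ b₂ i := by
    have := integral_mono_ae (integrable_const c) hgi2 hg2ge
    rwa [integral_const, probReal_univ, one_smul, hgint2] at this
  have hb12 : b₁ ≠ b₂ := by
    intro h
    rw [h] at hb₁lt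
    linarith
  -- barycenters stay in the sublevel set
  set S : Set (EuclideanSpace ℝ (Fin n)) := {ξ | f ξ ≤ m} with hSdef
  have hSconv : Convex ℝ S := levelConvex_sublevel hslc.1 m
  have hf1 : f b₁ ≤ m :=
    barycenter_mem_aux (Module.finrank ℝ (EuclideanSpace ℝ (Fin n))) le_rfl μ₁ φ hφ1i S
      hSconv hae1
  have hf2 : f b₂ ≤ m :=
    barycenter_mem_aux (Module.finrank ℝ (EuclideanSpace ℝ (Fin n))) le_rfl μ₂ φ hφ2i S
      hSconv hae2
  have hstrict : f b < m := by
    rw [hsplit]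
    exact lt_of_lt_of_le (hslc.2 b₁ b₂ hb12 t ⟨ht0, ht1⟩) (max_le hf1 hf2)
  rw [hMm]
  exact_mod_cast hstrict

/-- A Borel measurable level convex `f : ℝⁿ → ℝ` is strictly level convex if and only if
`f (∫_Ω φ dμ) < μ-ess sup_{x ∈ Ω} f (φ x)` for every probability measure `μ` supported on
an open set `Ω ⊆ ℝ^d` and every `φ ∈ L¹_μ(Ω; ℝⁿ)` which is not `μ`-a.e. constant. -/
theorem strictLevelConvex_iff_strict_supremal_jensen {n : ℕ}
    (f : EuclideanSpace ℝ (Fin n) → ℝ) (hf : Measurable f)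
    (hlc : LevelConvex f) :
    StrictLevelConvex f ↔
      ∀ (d : ℕ) (Ω : Set (EuclideanSpace ℝ (Fin d)))
        (μ : Measure (EuclideanSpace ℝ (Fin d))),
        IsOpen Ω → IsProbabilityMeasure μ → μ Ωᶜ = 0 →
        ∀ φ : EuclideanSpace ℝ (Fin d) → EuclideanSpace ℝ (Fin n),
          Integrable φ μ →
          ¬ (∃ z : EuclideanSpace ℝ (Fin n), φ =ᵐ[μ] fun _ => z) →
          (f (∫ x, φ x ∂μ) : EReal) < essSup (fun x => (f (φ x) : EReal)) μ := by
  constructor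
  · intro hslc d Ω μ hΩopen hμP hΩc φ hφi hne
    haveI := hμP
    set ψ := hφi.1.mk φ with hψdef
    have hψm : StronglyMeasurable ψ := hφi.1.stronglyMeasurable_mk
    have hψae : φ =ᵐ[μ] ψ := hφi.1.ae_eq_mk
    have hψi : Integrable ψ μ := hφi.congr hψae
    have hψne : ¬∃ z, ψ =ᵐ[μ] fun _ => z := by
      rintro ⟨z, hz⟩
      exact hne ⟨z, hψae.trans hz⟩
    have key := forward_key f hslc μ ψ hψi hψm hψne
    have h1 : ∫ x, φ x ∂μ = ∫ x, ψ x ∂μ := integral_congr_ae hψae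
    have h2 : essSup (fun x => (f (φ x) : EReal)) μ
        = essSup (fun x => (f (ψ x) : EReal)) μ :=
      essSup_congr_ae (hψae.mono fun x hx => by show (f (φ x) : EReal) = f (ψ x); rw [hx])
    rw [h1, h2]
    exact key
  · intro h
    refine ⟨hlc, ?_⟩
    intro ξ η hξη t ht
    classical
    set a : EuclideanSpace ℝ (Fin 1) := 0 with hadef
    set bpt : EuclideanSpace ℝ (Fin 1) := EuclideanSpace.single 0 1 with hbdef
    have hab : a ≠ bpt := by
      intro hcontr
      have h0 : a 0 = bpt 0 := by rw [hcontr]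
      rw [hadef, hbdef] at h0
      simp [EuclideanSpace.single_apply] at h0
    set μ : Measure (EuclideanSpace ℝ (Fin 1)) :=
      (ENNReal.ofReal t) • Measure.dirac a + (ENNReal.ofReal (1 - t)) • Measure.dirac bpt
      with hμdef
    have ht0 : (0:ℝ) < t := ht.1
    have ht1 : t < 1 := ht.2
    haveI hμP : IsProbabilityMeasure μ := by
      constructor
      rw [hμdef]
      simp only [Measure.add_apply, Measure.smul_apply, Measure.dirac_apply_of_mem
        (Set.mem_univ _), smul_eq_mul, mul_one]
      rw [← ENNReal.ofReal_add (by linarith) (by linarith)]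
      norm_num
    set φ : EuclideanSpace ℝ (Fin 1) → EuclideanSpace ℝ (Fin n) :=
      fun x => if x = a then ξ else η with hφdef
    have hφmeas : Measurable φ := by
      apply Measurable.ite _ measurable_const measurable_const
      rw [show {x : EuclideanSpace ℝ (Fin 1) | x = a} = {a} from Set.setOf_eq_eq_singleton]
      exact measurableSet_singleton a
    have hba : bpt ≠ a := fun hh => hab hh.symm
    have hφa : φ a = ξ := by rw [hφdef]; simp
    have hφb : φ bpt = η := by rw [hφdef]; simp [hba]
    have hφi : Integrable φ μ := by
      refine (integrable_const (max ‖ξ‖ ‖η‖)).mono' hφmeas.aestronglyMeasurable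
        (Filter.Eventually.of_forall fun x => ?_)
      by_cases hx : x = a
      · rw [hφdef]; simp [hx]
      · rw [hφdef]; simp [hx]
    have hti : (ENNReal.ofReal t).toReal = t := ENNReal.toReal_ofReal ht0.le
    have hsi : (ENNReal.ofReal (1 - t)).toReal = 1 - t := ENNReal.toReal_ofReal (by linarith)
    have hint : ∫ x, φ x ∂μ = t • ξ + (1 - t) • η := by
      rw [hμdef] at hφi ⊢
      rw [integral_add_measure hφi.left_of_add_measure hφi.right_of_add_measure,
        integral_smul_measure, integral_smul_measure, integral_dirac, integral_dirac,
        hφa, hφb, hti, hsi]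
    have hφne : ¬∃ z : EuclideanSpace ℝ (Fin n), φ =ᵐ[μ] fun _ => z := by
      rintro ⟨z, hz⟩
      have hμN : μ {x | ¬ φ x = z} = 0 := by
        have := Filter.eventually_iff.1 hz
        rw [mem_ae_iff] at this
        exact this
      rw [hμdef, Measure.add_apply, Measure.smul_apply, Measure.smul_apply,
        smul_eq_mul, smul_eq_mul] at hμN
      obtain ⟨h1, h2⟩ := add_eq_zero.1 hμN
      have ha_mem : φ a = z := by
        by_contra hcon
        rw [Measure.dirac_apply' a (by
          rw [show {x : EuclideanSpace ℝ (Fin 1) | ¬ φ x = z} = φ ⁻¹' {z}ᶜ from rfl]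
          exact hφmeas (measurableSet_singleton z).compl)] at h1
        rw [Set.indicator_of_mem (by exact hcon) (1 : EuclideanSpace ℝ (Fin 1) → ENNReal)] at h1
        simp only [Pi.one_apply, mul_one] at h1
        exact (ENNReal.ofReal_pos.2 ht0).ne' h1
      have hb_mem : φ bpt = z := by
        by_contra hcon
        rw [Measure.dirac_apply' bpt (by
          rw [show {x : EuclideanSpace ℝ (Fin 1) | ¬ φ x = z} = φ ⁻¹' {z}ᶜ from rfl]
          exact hφmeas (measurableSet_singleton z).compl)] at h2
        rw [Set.indicator_of_mem (by exact hcon) (1 : EuclideanSpace ℝ (Fin 1) → ENNReal)] at h2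
        simp only [Pi.one_apply, mul_one] at h2
        exact (ENNReal.ofReal_pos.2 (by linarith : (0:ℝ) < 1 - t)).ne' h2
      apply hξη
      rw [← hφa, ← hφb, ha_mem, hb_mem]
    have hess : essSup (fun x => (f (φ x) : EReal)) μ ≤ ((max (f ξ) (f η) : ℝ) : EReal) := by
      refine essSup_le_of_ae_le _ ?_
      refine Filter.Eventually.of_forall fun x => ?_
      by_cases hx : x = a
      · rw [hφdef]; simp only [hx, if_pos rfl]
        exact_mod_cast EReal.coe_le_coe_iff.2 (le_max_left _ _)
      · rw [hφdef]; simp only [if_neg hx]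
        exact_mod_cast EReal.coe_le_coe_iff.2 (le_max_right _ _)
    have final := h 1 Set.univ μ isOpen_univ hμP (by simp) φ hφi hφne
    rw [hint] at final
    have : (f (t • ξ + (1 - t) • η) : EReal) < ((max (f ξ) (f η) : ℝ) : EReal) :=
      lt_of_lt_of_le final hess
    exact_mod_cast this
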